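/- Let A be a tensor of order P and B a tensor of order Q, both of dimension M in each mode, and let A ⊗ B be their tensor product, the order-(P+Q) tensor with (A ⊗ B)(d) = A(d restricted to the first P modes) · B(d restricted to the last Q modes). Let (I,J) be a partition of Fin (P+Q) into disjoint subsets with I ∪ J = univ, let (I₁,J₁) be the partition of Fin P induced by the elements of (I,J) that lie in the first P modes, and let (I₂,J₂) be the partition of Fin Q induced by the elements of (I,J) that lie in the last Q modes (with indices shifted down by P). Then for every row index u and column index v of ⟦A ⊗ B⟧_{I,J}, the entry ⟦A ⊗ B⟧_{I,J}(u,v) equals ⟦A⟧_{I₁,J₁}(u₁,v₁) · ⟦B⟧_{I₂,J₂}(u₂,v₂), where u₁, u₂ are the restrictions of u to indices in the first P and last Q modes respectively, and similarly for v₁, v₂. Consequently ⟦A ⊗ B⟧_{I,J} equals, up to the canonical bijections of row and column index sets, the Kronecker product of ⟦A⟧_{I₁,J₁} and ⟦B⟧_{I₂,J₂}, and rank ⟦A ⊗ B⟧_{I,J} = rank ⟦A⟧_{I₁,J₁} · rank ⟦B⟧_{I₂,J₂}. -/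

import Mathlib

open MeasureTheory

noncomputable section

/-- Matricization of a tensor `A` of order `N` and dimension `M` in each mode, with
respect to a partition `(I, J)` of `Fin N` (given `I ∪ J = univ`). -/
def matricize {N M : ℕ} (A : (Fin N → Fin M) → ℝ) (I J : Finset (Fin N))
    (hU : I ∪ J = Finset.univ) :
    Matrix ({n // n ∈ I} → Fin M) ({n // n ∈ J} → Fin M) ℝ :=
  Matrix.of fun u v => A fun n =>
    if h : n ∈ I then u ⟨n, h⟩
    else v ⟨n, by
      have hn : n ∈ I ∪ J := by rw [hU]; exact Finset.mem_univ n
      exact (Finset.mem_union.mp hn).resolve_left h⟩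


/-- Tensor product of an order-`P` tensor and an order-`Q` tensor. -/
def tensorProd {P Q M : ℕ} (A : (Fin P → Fin M) → ℝ) (B : (Fin Q → Fin M) → ℝ) :
    (Fin (P + Q) → Fin M) → ℝ :=
  fun d => A (fun i => d (Fin.castAdd Q i)) * B (fun j => d (Fin.natAdd P j))

open TensorProduct in
lemma finrank_range_map {V W V' W' : Type*} [AddCommGroup V] [Module ℝ V]
    [AddCommGroup W] [Module ℝ W] [AddCommGroup V'] [Module ℝ V']
    [AddCommGroup W'] [Module ℝ W']
    [FiniteDimensional ℝ V] [FiniteDimensional ℝ V']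
    (f : V →ₗ[ℝ] W) (g : V' →ₗ[ℝ] W') :
    Module.finrank ℝ (LinearMap.range (TensorProduct.map f g)) =
      Module.finrank ℝ (LinearMap.range f) * Module.finrank ℝ (LinearMap.range g) := by
  have h1 : TensorProduct.map f g =
      (mapIncl (LinearMap.range f) (LinearMap.range g)).comp
        (TensorProduct.map f.rangeRestrict g.rangeRestrict) := by
    ext v w
    simp [mapIncl]
  have hsurj : Function.Surjective (TensorProduct.map f.rangeRestrict g.rangeRestrict) :=
    TensorProduct.map_surjective f.surjective_rangeRestrict g.surjective_rangeRestrict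
  have h2 : LinearMap.range (TensorProduct.map f g) =
      LinearMap.range (mapIncl (LinearMap.range f) (LinearMap.range g)) := by
    rw [h1, LinearMap.range_comp_of_range_eq_top _ (LinearMap.range_eq_top.2 hsurj)]
  have hinj : Function.Injective (mapIncl (LinearMap.range f) (LinearMap.range g)) := by
    rw [mapIncl, ← LinearMap.rTensor_comp_lTensor]
    exact (Module.Flat.rTensor_preserves_injective_linearMap _
        (Submodule.injective_subtype _)).comp
      (Module.Flat.lTensor_preserves_injective_linearMap _ (Submodule.injective_subtype _))
  rw [h2, LinearMap.finrank_range_of_inj hinj, Module.finrank_tensorProduct]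

lemma rank_reindex' {m n m' n' : Type*} [Fintype n] [Fintype n']
    (e₁ : m ≃ m') (e₂ : n ≃ n') (A : Matrix m n ℝ) :
    (Matrix.reindex e₁ e₂ A).rank = A.rank := by
  rw [Matrix.rank, Matrix.rank, Matrix.mulVecLin_reindex, LinearMap.range_comp,
    LinearMap.range_comp, LinearEquiv.range, Submodule.map_top, LinearEquiv.finrank_map_eq]

open Kronecker
lemma rank_kronecker' {m n p q : Type*} [Fintype m] [Fintype n] [Fintype p] [Fintype q]
    (A : Matrix m n ℝ) (B : Matrix p q ℝ) :
    (A ⊗ₖ B).rank = A.rank * B.rank := by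
  classical
  let bmp := (Pi.basisFun ℝ m).tensorProduct (Pi.basisFun ℝ p)
  let bnq := (Pi.basisFun ℝ n).tensorProduct (Pi.basisFun ℝ q)
  let emp := bmp.equivFun
  let enq := bnq.equivFun
  have key : (A ⊗ₖ B).mulVecLin ∘ₗ enq.toLinearMap =
      emp.toLinearMap ∘ₗ (TensorProduct.map A.mulVecLin B.mulVecLin) := by
    refine TensorProduct.ext' fun x y => ?_
    have hx : enq (x ⊗ₜ y) = fun kl : n × q => x kl.1 * y kl.2 := by
      funext kl
      show bnq.repr (x ⊗ₜ y) kl = _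
      obtain ⟨k, l⟩ := kl
      rw [Module.Basis.tensorProduct_repr_tmul_apply]
      simp [mul_comm]
    simp only [LinearMap.comp_apply, LinearEquiv.coe_coe, hx, TensorProduct.map_tmul]
    funext ij
    obtain ⟨i, j⟩ := ij
    show ((A ⊗ₖ B).mulVec fun kl : n × q => x kl.1 * y kl.2) (i, j) =
      emp (A.mulVecLin x ⊗ₜ B.mulVecLin y) (i, j)
    have h2 : emp (A.mulVecLin x ⊗ₜ B.mulVecLin y) (i, j) = A.mulVec x i * B.mulVec y j := by
      show bmp.repr _ (i, j) = _
      rw [Module.Basis.tensorProduct_repr_tmul_apply]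
      simp [Matrix.mulVecLin, mul_comm]
    rw [h2]
    simp only [Matrix.mulVec, dotProduct, Matrix.kroneckerMap_apply]
    rw [Finset.sum_mul_sum]
    rw [← Finset.sum_product']
    refine Finset.sum_congr rfl fun kl _ => ?_
    ring
  have hr : LinearMap.range (A ⊗ₖ B).mulVecLin =
      LinearMap.range ((A ⊗ₖ B).mulVecLin ∘ₗ enq.toLinearMap) :=
    (LinearMap.range_comp_of_range_eq_top _ enq.range).symm
  rw [Matrix.rank, hr, key, LinearMap.range_comp,
    LinearEquiv.finrank_map_eq, finrank_range_map, Matrix.rank, Matrix.rank]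


/-- Splitting a subtype of `Fin (P+Q)` into its first-block and second-block parts. -/
def splitEquiv {P Q : ℕ} (I : Finset (Fin (P + Q))) (I₁ : Finset (Fin P)) (I₂ : Finset (Fin Q))
    (h₁ : ∀ i, i ∈ I₁ ↔ Fin.castAdd Q i ∈ I) (h₂ : ∀ j, j ∈ I₂ ↔ Fin.natAdd P j ∈ I) :
    ({i // i ∈ I₁} ⊕ {j // j ∈ I₂}) ≃ {n // n ∈ I} where
  toFun s := s.elim (fun i => ⟨Fin.castAdd Q i.1, (h₁ _).mp i.2⟩)
    (fun j => ⟨Fin.natAdd P j.1, (h₂ _).mp j.2⟩)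
  invFun n :=
    if h : (n.1 : ℕ) < P then
      Sum.inl ⟨⟨n.1, h⟩, (h₁ _).mpr (by
        convert n.2 using 2
        exact Fin.ext rfl)⟩
    else
      Sum.inr ⟨⟨(n.1 : ℕ) - P, by omega⟩, (h₂ _).mpr (by
        convert n.2 using 2
        exact Fin.ext (by simp [Fin.natAdd]; omega))⟩
  left_inv := by
    rintro (⟨i, hi⟩ | ⟨j, hj⟩)
    · simp only [Sum.elim_inl]
      erw [dif_pos (show ((Fin.castAdd Q i : Fin (P+Q)) : ℕ) < P from i.isLt)]
      congr 1
    · simp only [Sum.elim_inr]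
      erw [dif_neg (show ¬ ((Fin.natAdd P j : Fin (P+Q)) : ℕ) < P by simp [Fin.natAdd])]
      congr 1
      exact Subtype.ext (Fin.ext (by simp [Fin.natAdd]))
  right_inv := by
    rintro ⟨n, hn⟩
    simp only []
    by_cases h : (n : ℕ) < P
    · rw [dif_pos h]
      exact Subtype.ext (Fin.ext rfl)
    · rw [dif_neg h]
      exact Subtype.ext (Fin.ext (by simp [Fin.natAdd]; omega))

open Kronecker
theorem stmt9 (P Q M : ℕ) (A : (Fin P → Fin M) → ℝ) (B : (Fin Q → Fin M) → ℝ)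
    (I J : Finset (Fin (P + Q))) (hdisj : Disjoint I J) (hU : I ∪ J = Finset.univ)
    (I₁ J₁ : Finset (Fin P)) (I₂ J₂ : Finset (Fin Q))
    (hI₁ : ∀ i : Fin P, i ∈ I₁ ↔ Fin.castAdd Q i ∈ I)
    (hJ₁ : ∀ i : Fin P, i ∈ J₁ ↔ Fin.castAdd Q i ∈ J)
    (hI₂ : ∀ j : Fin Q, j ∈ I₂ ↔ Fin.natAdd P j ∈ I)
    (hJ₂ : ∀ j : Fin Q, j ∈ J₂ ↔ Fin.natAdd P j ∈ J)
    (hU₁ : I₁ ∪ J₁ = Finset.univ) (hU₂ : I₂ ∪ J₂ = Finset.univ) :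
    (∀ (u : {n // n ∈ I} → Fin M) (v : {n // n ∈ J} → Fin M),
      matricize (tensorProd A B) I J hU u v =
        matricize A I₁ J₁ hU₁
            (fun i => u ⟨Fin.castAdd Q i.1, (hI₁ i.1).mp i.2⟩)
            (fun i => v ⟨Fin.castAdd Q i.1, (hJ₁ i.1).mp i.2⟩) *
          matricize B I₂ J₂ hU₂
            (fun j => u ⟨Fin.natAdd P j.1, (hI₂ j.1).mp j.2⟩)
            (fun j => v ⟨Fin.natAdd P j.1, (hJ₂ j.1).mp j.2⟩)) ∧
    (matricize (tensorProd A B) I J hU).rank =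
      (matricize A I₁ J₁ hU₁).rank * (matricize B I₂ J₂ hU₂).rank := by
  have part1 : ∀ (u : {n // n ∈ I} → Fin M) (v : {n // n ∈ J} → Fin M),
      matricize (tensorProd A B) I J hU u v =
        matricize A I₁ J₁ hU₁
            (fun i => u ⟨Fin.castAdd Q i.1, (hI₁ i.1).mp i.2⟩)
            (fun i => v ⟨Fin.castAdd Q i.1, (hJ₁ i.1).mp i.2⟩) *
          matricize B I₂ J₂ hU₂
            (fun j => u ⟨Fin.natAdd P j.1, (hI₂ j.1).mp j.2⟩)
            (fun j => v ⟨Fin.natAdd P j.1, (hJ₂ j.1).mp j.2⟩) := by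
    intro u v
    unfold matricize tensorProd
    simp only [Matrix.of_apply]
    congr 1
    · congr 1
      funext i
      by_cases h : i ∈ I₁
      · rw [dif_pos ((hI₁ i).mp h), dif_pos h]
      · rw [dif_neg (fun hc => h ((hI₁ i).mpr hc)), dif_neg h]
    · congr 1
      funext j
      by_cases h : j ∈ I₂
      · rw [dif_pos ((hI₂ j).mp h), dif_pos h]
      · rw [dif_neg (fun hc => h ((hI₂ j).mpr hc)), dif_neg h]
  refine ⟨part1, ?_⟩
  let eR : ({n // n ∈ I} → Fin M) ≃ (({i // i ∈ I₁} → Fin M) × ({j // j ∈ I₂} → Fin M)) :=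
    (Equiv.arrowCongr (splitEquiv I I₁ I₂ hI₁ hI₂).symm (Equiv.refl _)).trans
      (Equiv.sumArrowEquivProdArrow _ _ _)
  let eC : ({n // n ∈ J} → Fin M) ≃ (({i // i ∈ J₁} → Fin M) × ({j // j ∈ J₂} → Fin M)) :=
    (Equiv.arrowCongr (splitEquiv J J₁ J₂ hJ₁ hJ₂).symm (Equiv.refl _)).trans
      (Equiv.sumArrowEquivProdArrow _ _ _)
  have hM : matricize (tensorProd A B) I J hU =
      ((matricize A I₁ J₁ hU₁) ⊗ₖ (matricize B I₂ J₂ hU₂)).submatrix eR eC := by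
    ext u v
    rw [Matrix.submatrix_apply, Matrix.kroneckerMap_apply, part1 u v]
    rfl
  rw [hM,
    show ((matricize A I₁ J₁ hU₁) ⊗ₖ (matricize B I₂ J₂ hU₂)).submatrix eR eC =
      Matrix.reindex eR.symm eC.symm ((matricize A I₁ J₁ hU₁) ⊗ₖ (matricize B I₂ J₂ hU₂))
      from rfl,
    rank_reindex', rank_kronecker']
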